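/- arXiv:1412.2467 — 3 statements merged into one kernel-verified Lean document; each statement's English description precedes it below -/
import Mathlib

section
/- Let A be a commutative unital ring, let π be an ideal of A, and let n ≥ 2. Then Γ_n(π) = E_n(π)·Γ_n(π²), i.e., every element of Γ_n(π) is a product of an element of E_n(π) and an element of Γ_n(π²). -/
open Matrix

/-- `SL n A` is the special linear group `SL_n(A)`. -/
abbrev SL (n : ℕ) (A : Type) [CommRing A] : Type := Matrix.SpecialLinearGroup (Fin n) A

/-- The elementary matrix `e_{ij}(a) = 1_n + a·e_{ij}` as an element of `SL_n(A)` (for `i ≠ j`). -/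
def elem (A : Type) [CommRing A] {n : ℕ} (i j : Fin n) (hij : i ≠ j) (a : A) : SL n A :=
  ⟨Matrix.transvection i j a, Matrix.det_transvection_of_ne i j hij a⟩

/-- The (absolute) elementary subgroup `E_n(A)`: the subgroup of `SL_n(A)` generated by all
elementary matrices. -/
def EgrpAbs (A : Type) [CommRing A] (n : ℕ) : Subgroup (SL n A) :=
  Subgroup.closure {x | ∃ (i j : Fin n) (hij : i ≠ j) (a : A), x = elem A i j hij a}

/-- The normal (relative) elementary subgroup `E_n(π)`: the normal subgroup of `E_n(A)`
generated by the elementary matrices with coefficients in `π`, viewed inside `SL_n(A)`;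
as a subgroup of `SL_n(A)` it is generated by all `E_n(A)`-conjugates of the elementary
matrices with coefficients in `π`. -/
def Egrp (A : Type) [CommRing A] (n : ℕ) (π : Ideal A) : Subgroup (SL n A) :=
  Subgroup.closure {x | ∃ g ∈ EgrpAbs A n, ∃ (i j : Fin n) (hij : i ≠ j), ∃ a ∈ π,
    x = g * elem A i j hij a * g⁻¹}

/-- The principal congruence subgroup `Γ_n(π) = {g ∈ SL_n(A) : g ≡ 1_n mod π}`, as a set. -/
def Γset (A : Type) [CommRing A] (n : ℕ) (π : Ideal A) : Set (SL n A) :=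
  {g | ∀ p q : Fin n, (g : Matrix (Fin n) (Fin n) A) p q - (1 : Matrix (Fin n) (Fin n) A) p q ∈ π}

section Helpers

variable {A : Type} [CommRing A] {n : ℕ}

/-- Total version of `elem`. -/
def elem' (A : Type) [CommRing A] {n : ℕ} (i j : Fin n) (a : A) : SL n A :=
  if h : i ≠ j then elem A i j h a else 1

lemma coe_elem (i j : Fin n) (h : i ≠ j) (a : A) :
    (elem A i j h a : Matrix (Fin n) (Fin n) A) = 1 + Matrix.single i j a := rfl

lemma coe_elem' (i j : Fin n) (a : A) :
    (elem' A i j a : Matrix (Fin n) (Fin n) A)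
      = 1 + (if i = j then 0 else Matrix.single i j a) := by
  unfold elem'
  by_cases h : i = j
  · simp [h]
  · simp [h, coe_elem]

lemma elem_mul_neg (i j : Fin n) (h : i ≠ j) (a : A) :
    elem A i j h a * elem A i j h (-a) = 1 := by
  apply Subtype.ext
  rw [Matrix.SpecialLinearGroup.coe_mul]
  show Matrix.transvection i j a * Matrix.transvection i j (-a) = _
  rw [Matrix.transvection_mul_transvection_same _ _ h, add_neg_cancel,
    Matrix.transvection_zero]
  rfl

lemma elem_inv (i j : Fin n) (h : i ≠ j) (a : A) :
    (elem A i j h a)⁻¹ = elem A i j h (-a) :=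
  inv_eq_of_mul_eq_one_right (elem_mul_neg i j h a)

lemma elem'_inv (i j : Fin n) (a : A) :
    (elem' A i j a)⁻¹ = elem' A i j (-a) := by
  unfold elem'
  split
  · exact elem_inv i j ‹_› a
  · simp

lemma elem_mem_EgrpAbs (i j : Fin n) (h : i ≠ j) (a : A) :
    elem A i j h a ∈ EgrpAbs A n :=
  Subgroup.subset_closure ⟨i, j, h, a, rfl⟩

lemma conj_elem_mem {π : Ideal A} {y : SL n A} (hy : y ∈ EgrpAbs A n) (i j : Fin n)
    (h : i ≠ j) {a : A} (ha : a ∈ π) :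
    y * elem A i j h a * y⁻¹ ∈ Egrp A n π :=
  Subgroup.subset_closure ⟨y, hy, i, j, h, a, ha, rfl⟩

lemma elem_mem_Egrp {π : Ideal A} (i j : Fin n) (h : i ≠ j) {a : A} (ha : a ∈ π) :
    elem A i j h a ∈ Egrp A n π := by
  have := conj_elem_mem (π := π) (one_mem (EgrpAbs A n)) i j h ha
  simpa using this

lemma elem'_mem_Egrp {π : Ideal A} (i j : Fin n) {a : A} (ha : i ≠ j → a ∈ π) :
    elem' A i j a ∈ Egrp A n π := by
  unfold elem'
  split
  · exact elem_mem_Egrp i j ‹_› (ha ‹_›)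
  · exact one_mem _

lemma matMulMul_mem {π : Ideal A} {S : Matrix (Fin n) (Fin n) A} (hS : ∀ p q, S p q ∈ π)
    (M N : Matrix (Fin n) (Fin n) A) : ∀ p q, (M * S * N) p q ∈ π := by
  intro p q
  rw [Matrix.mul_apply]
  refine Ideal.sum_mem _ fun c _ => ?_
  rw [Matrix.mul_apply, Finset.sum_mul]
  refine Ideal.sum_mem _ fun d _ => ?_
  exact Ideal.mul_mem_right _ _ (Ideal.mul_mem_left _ _ (hS d c))

lemma mem_Γset_iff {π : Ideal A} {g : SL n A} :
    g ∈ Γset A n π ↔ ∀ p q, ((g : Matrix (Fin n) (Fin n) A) - 1) p q ∈ π := by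
  constructor
  · intro h p q; rw [Matrix.sub_apply]; exact h p q
  · intro h p q; rw [← Matrix.sub_apply]; exact h p q

/-- `Γset` as a subgroup. -/
def Γgrp (A : Type) [CommRing A] (n : ℕ) (π : Ideal A) : Subgroup (SL n A) where
  carrier := Γset A n π
  one_mem' := fun p q => by simp
  mul_mem' := by
    intro a b ha hb p q
    rw [← Matrix.sub_apply]
    have key : ((a * b : SL n A) : Matrix (Fin n) (Fin n) A) - 1
        = ((a : Matrix (Fin n) (Fin n) A) - 1) * ((b : Matrix (Fin n) (Fin n) A) - 1)
          + ((a : Matrix (Fin n) (Fin n) A) - 1) + ((b : Matrix (Fin n) (Fin n) A) - 1) := by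
      rw [Matrix.SpecialLinearGroup.coe_mul]; noncomm_ring
    rw [key, Matrix.add_apply, Matrix.add_apply, Matrix.mul_apply]
    refine Ideal.add_mem _ (Ideal.add_mem _ (Ideal.sum_mem _ fun c _ => ?_) ?_) ?_
    · refine Ideal.mul_mem_left _ _ ?_
      rw [Matrix.sub_apply]; exact hb c q
    · rw [Matrix.sub_apply]; exact ha p q
    · rw [Matrix.sub_apply]; exact hb p q
  inv_mem' := by
    intro a ha p q
    rw [← Matrix.sub_apply]
    have h1 : ((a⁻¹ : SL n A) : Matrix (Fin n) (Fin n) A) * (a : Matrix (Fin n) (Fin n) A) = 1 := by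
      rw [← Matrix.SpecialLinearGroup.coe_mul, inv_mul_cancel]; rfl
    have key : ((a⁻¹ : SL n A) : Matrix (Fin n) (Fin n) A) - 1
        = ((a⁻¹ : SL n A) : Matrix (Fin n) (Fin n) A) * (1 - (a : Matrix (Fin n) (Fin n) A)) := by
      rw [mul_sub, h1, mul_one]
    rw [key, Matrix.mul_apply]
    refine Ideal.sum_mem _ fun c _ => ?_
    refine Ideal.mul_mem_left _ _ ?_
    have := ha c q
    simpa [Matrix.sub_apply] using neg_mem this

lemma Egrp_le_Γgrp (π : Ideal A) : Egrp A n π ≤ Γgrp A n π := by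
  rw [Egrp, Subgroup.closure_le]
  rintro x ⟨y, -, i, j, hij, a, ha, rfl⟩
  show _ ∈ Γset A n π
  rw [mem_Γset_iff]
  intro p q
  have h1 : ((y * elem A i j hij a * y⁻¹ : SL n A) : Matrix (Fin n) (Fin n) A)
      = (y : Matrix (Fin n) (Fin n) A) * (1 + Matrix.single i j a)
        * ((y⁻¹ : SL n A) : Matrix (Fin n) (Fin n) A) := by
    rw [Matrix.SpecialLinearGroup.coe_mul, Matrix.SpecialLinearGroup.coe_mul, coe_elem]
  have h2 : (y : Matrix (Fin n) (Fin n) A) * ((y⁻¹ : SL n A) : Matrix (Fin n) (Fin n) A) = 1 := by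
    rw [← Matrix.SpecialLinearGroup.coe_mul, mul_inv_cancel]; rfl
  have key : ((y * elem A i j hij a * y⁻¹ : SL n A) : Matrix (Fin n) (Fin n) A) - 1
      = (y : Matrix (Fin n) (Fin n) A) * Matrix.single i j a
        * ((y⁻¹ : SL n A) : Matrix (Fin n) (Fin n) A) := by
    rw [h1, mul_add, add_mul, mul_one, h2]; abel
  rw [key]
  refine matMulMul_mem (fun p q => ?_) _ _ p q
  by_cases hpq : i = p ∧ j = q
  · rw [hpq.1, hpq.2, single_apply_same]; exact ha
  · rw [single_apply_of_ne _ _ _ _ _ hpq]; exact zero_mem _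

end Helpers

section Quot

variable {A : Type} [CommRing A] {n : ℕ} (π : Ideal A)

local notation "φ" => Ideal.Quotient.mk (π ^ 2)
local notation "B" => A ⧸ (π ^ 2)

/-- Elements of the quotient `A ⧸ π²` that are images of elements of `π`. -/
def inQ (x : A ⧸ (π ^ 2)) : Prop := ∃ a ∈ π, Ideal.Quotient.mk (π ^ 2) a = x

lemma inQ_zero : inQ π 0 := ⟨0, zero_mem _, map_zero _⟩

lemma inQ_neg {x} (h : inQ π x) : inQ π (-x) := by
  obtain ⟨a, ha, rfl⟩ := h
  exact ⟨-a, neg_mem ha, map_neg _ _⟩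

lemma inQ_add {x y} (hx : inQ π x) (hy : inQ π y) : inQ π (x + y) := by
  obtain ⟨a, ha, rfl⟩ := hx
  obtain ⟨b, hb, rfl⟩ := hy
  exact ⟨a + b, add_mem ha hb, map_add _ _ _⟩

lemma inQ_mul_zero {x y} (hx : inQ π x) (hy : inQ π y) : x * y = 0 := by
  obtain ⟨a, ha, rfl⟩ := hx
  obtain ⟨b, hb, rfl⟩ := hy
  rw [← _root_.map_mul, Ideal.Quotient.eq_zero_iff_mem, pow_two]
  exact Ideal.mul_mem_mul ha hb

/-- Matrices all of whose entries are in the image of `π`. -/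
def MQ (u : Matrix (Fin n) (Fin n) (A ⧸ (π ^ 2))) : Prop := ∀ p q, inQ π (u p q)

lemma MQ_zero : MQ π (0 : Matrix (Fin n) (Fin n) B) := fun _ _ => inQ_zero π

lemma MQ_neg {u : Matrix (Fin n) (Fin n) B} (h : MQ π u) : MQ π (-u) := fun p q => by
  rw [Matrix.neg_apply]; exact inQ_neg π (h p q)

lemma MQ_add {u v : Matrix (Fin n) (Fin n) B} (hu : MQ π u) (hv : MQ π v) : MQ π (u + v) :=
  fun p q => by rw [Matrix.add_apply]; exact inQ_add π (hu p q) (hv p q)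

lemma MQ_sub {u v : Matrix (Fin n) (Fin n) B} (hu : MQ π u) (hv : MQ π v) : MQ π (u - v) :=
  fun p q => by rw [sub_eq_add_neg]; exact MQ_add π hu (MQ_neg π hv) p q

lemma MQ_std {i j : Fin n} {b : A ⧸ (π ^ 2)} (hb : inQ π b) :
    MQ π (Matrix.single i j b) := by
  intro p q
  by_cases hpq : i = p ∧ j = q
  · rw [hpq.1, hpq.2, single_apply_same]; exact hb
  · rw [single_apply_of_ne _ _ _ _ _ hpq]; exact inQ_zero π

lemma MQ_sum {ι : Type} {s : Finset ι} {u : ι → Matrix (Fin n) (Fin n) B}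
    (h : ∀ i ∈ s, MQ π (u i)) : MQ π (∑ i ∈ s, u i) := by
  intro p q
  rw [Matrix.sum_apply]
  classical
  induction s using Finset.induction_on with
  | empty => simpa using inQ_zero π
  | insert _ _ hns ih =>
    rename_i a s
    rw [Finset.sum_insert hns]
    exact inQ_add π (h a (Finset.mem_insert_self a s) p q)
      (ih fun i hi => h i (Finset.mem_insert_of_mem hi))

lemma MQ_mul_zero {u v : Matrix (Fin n) (Fin n) B} (hu : MQ π u) (hv : MQ π v) :
    u * v = 0 := by
  ext p q
  rw [Matrix.mul_apply, Matrix.zero_apply]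
  refine Finset.sum_eq_zero fun c _ => ?_
  exact inQ_mul_zero π (hu p c) (hv c q)

lemma MQ_listSum {l : List (Matrix (Fin n) (Fin n) B)} (h : ∀ x ∈ l, MQ π x) :
    MQ π l.sum := by
  induction l with
  | nil => simpa using MQ_zero π
  | cons a t ih =>
    rw [List.sum_cons]
    exact MQ_add π (h a (List.mem_cons_self)) (ih fun x hx => h x (List.mem_cons_of_mem _ hx))

lemma prod_one_add {l : List (Matrix (Fin n) (Fin n) (A ⧸ (π ^ 2)))} (h : ∀ x ∈ l, MQ π x) :
    (l.map (fun u => 1 + u)).prod = 1 + l.sum := by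
  induction l with
  | nil => simp
  | cons a t ih =>
    rw [List.map_cons, List.prod_cons, List.sum_cons,
      ih fun x hx => h x (List.mem_cons_of_mem _ hx)]
    have h0 : a * t.sum = 0 :=
      MQ_mul_zero π (h a (List.mem_cons_self)) (MQ_listSum π fun x hx => h x (List.mem_cons_of_mem _ hx))
    rw [show (1 + a) * (1 + t.sum) = 1 + a + (t.sum + a * t.sum) by noncomm_ring, h0]
    abel

lemma prod_one_add' {ι : Type} {s : Finset ι} {f : ι → A ⧸ (π ^ 2)}
    (h : ∀ i ∈ s, inQ π (f i)) : ∏ i ∈ s, (1 + f i) = 1 + ∑ i ∈ s, f i := by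
  classical
  induction s using Finset.induction_on with
  | empty => simp
  | insert _ _ hns ih =>
    rename_i a s
    rw [Finset.prod_insert hns, Finset.sum_insert hns,
      ih fun i hi => h i (Finset.mem_insert_of_mem hi)]
    have h0 : f a * ∑ i ∈ s, f i = 0 := by
      rw [Finset.mul_sum]
      exact Finset.sum_eq_zero fun i hi =>
        inQ_mul_zero π (h a (Finset.mem_insert_self a s)) (h i (Finset.mem_insert_of_mem hi))
    rw [show (1 + f a) * (1 + ∑ i ∈ s, f i) = 1 + (f a + ∑ i ∈ s, f i) + f a * ∑ i ∈ s, f i by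
      ring, h0, add_zero]

end Quot

section CommCalc

variable {R : Type} [CommRing R] {n : ℕ}

lemma stdBasisMatrix_neg (i j : Fin n) (a : R) :
    Matrix.single i j (-a) = -Matrix.single i j a := by
  ext p q
  rw [Matrix.neg_apply]
  by_cases hpq : i = p ∧ j = q
  · rw [hpq.1, hpq.2, single_apply_same, single_apply_same]
  · rw [single_apply_of_ne _ _ _ _ _ hpq, single_apply_of_ne _ _ _ _ _ hpq,
      neg_zero]

lemma comm_calc {i k : Fin n} (hik : i ≠ k) (δ : R) (hδ : δ * δ = 0) :
    (1 + Matrix.single i k δ) * (1 + Matrix.single k i (1 : R))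
      * (1 + Matrix.single i k (-δ)) * (1 + Matrix.single k i (-1 : R))
    = 1 + (Matrix.single i i δ - Matrix.single k k δ + Matrix.single k i δ) := by
  set S := Matrix.single i k δ with hS
  set T := Matrix.single k i (1 : R) with hT
  have hST : S * T = Matrix.single i i δ := by
    rw [hS, hT, single_mul_single_same, mul_one]
  have hTS : T * S = Matrix.single k k δ := by
    rw [hS, hT, single_mul_single_same, one_mul]
  have hSS : S * S = 0 := by
    rw [hS, single_mul_single_of_ne (h := Ne.symm hik)]
  have hTT : T * T = 0 := by
    rw [hT, single_mul_single_of_ne (h := hik)]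
  have hTST : T * (S * T) = Matrix.single k i δ := by
    rw [hST, hT, single_mul_single_same, one_mul]
  have hSST : S * (S * T) = 0 := by rw [← mul_assoc, hSS, zero_mul]
  have hSTS : S * T * S = 0 := by
    rw [hST, hS, single_mul_single_same, hδ, single_zero]
  have hSTT : S * T * T = 0 := by
    rw [hST, hT, single_mul_single_of_ne (h := hik)]
  have hSTST : S * T * (S * T) = 0 := by
    rw [hST, single_mul_single_same, hδ, single_zero]
  rw [stdBasisMatrix_neg, stdBasisMatrix_neg, ← hS, ← hT, ← hST, ← hTS, ← hTST]
  have expand : (1 + S) * (1 + T) * (1 + -S) * (1 + -T)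
      = 1 + S * T - T * S + T * (S * T) - T * T - S * S + S * (S * T)
        - S * T * T - S * T * S + S * T * (S * T) := by
    noncomm_ring
  rw [expand, hSS, hTT, hSST, hSTT, hSTS, hSTST]
  abel

end CommCalc

section Psi

variable {A C : Type} [CommRing A] [CommRing C] {n : ℕ}

lemma map_stdBasisMatrix (ψ : A →+* C) (i j : Fin n) (a : A) :
    (Matrix.single i j a).map ψ = Matrix.single i j (ψ a) := by
  ext p q
  rw [Matrix.map_apply]
  by_cases hpq : i = p ∧ j = q
  · rw [hpq.1, hpq.2, single_apply_same, single_apply_same]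
  · rw [single_apply_of_ne _ _ _ _ _ hpq, single_apply_of_ne _ _ _ _ _ hpq,
      map_zero]

/-- Applying a ring hom entrywise, as a monoid hom from `SL n A` to matrices over `C`. -/
def Psi (ψ : A →+* C) : SL n A →* Matrix (Fin n) (Fin n) C where
  toFun x := ψ.mapMatrix (x : Matrix (Fin n) (Fin n) A)
  map_one' := by simp
  map_mul' x y := by show ψ.mapMatrix _ = ψ.mapMatrix _ * ψ.mapMatrix _; rw [Matrix.SpecialLinearGroup.coe_mul, _root_.map_mul]

lemma Psi_apply (ψ : A →+* C) (x : SL n A) (p q : Fin n) :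
    Psi ψ x p q = ψ ((x : Matrix (Fin n) (Fin n) A) p q) := rfl

lemma Psi_elem' (ψ : A →+* C) (i j : Fin n) (a : A) :
    Psi ψ (elem' A i j a)
      = 1 + (if i = j then 0 else Matrix.single i j (ψ a)) := by
  show ψ.mapMatrix _ = _
  rw [coe_elem', map_add, _root_.map_one]
  congr 1
  by_cases h : i = j
  · simp [h]
  · simp only [h, if_false]
    exact map_stdBasisMatrix ψ i j a

lemma Psi_det (ψ : A →+* C) (x : SL n A) : (Psi ψ x).det = 1 := by
  show (ψ.mapMatrix (x : Matrix (Fin n) (Fin n) A)).det = 1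
  rw [← RingHom.map_det, x.prop, _root_.map_one]

lemma sum_toList {ι M : Type} [AddCommMonoid M] (s : Finset ι) (f : ι → M) :
    (s.toList.map f).sum = ∑ i ∈ s, f i := by
  rw [← Multiset.sum_coe, ← Multiset.map_coe, Finset.coe_toList]
  rfl

end Psi

section Main

variable {A : Type} [CommRing A] {n : ℕ}

lemma forward {π : Ideal A} (k : Fin n) {g : SL n A} (hg : g ∈ Γset A n π) :
    ∃ e ∈ Egrp A n π, ∃ h ∈ Γset A n (π ^ 2), g = e * h := by
  classical
  set φ := Ideal.Quotient.mk (π ^ 2) with hφ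
  set Ψ : SL n A →* Matrix (Fin n) (Fin n) (A ⧸ π ^ 2) := Psi φ with hΨ
  have PsiA : ∀ (x : SL n A) (p q : Fin n),
      Ψ x p q = φ ((x : Matrix (Fin n) (Fin n) A) p q) := fun _ _ _ => rfl
  have PsiE : ∀ (i j : Fin n) (a : A), Ψ (elem' A i j a)
      = 1 + (if i = j then 0 else Matrix.single i j (φ a)) := fun i j a => Psi_elem' φ i j a
  have PsiD : ∀ x : SL n A, (Ψ x).det = 1 := fun x => Psi_det φ x
  have phi_one : ∀ p q : Fin n, φ ((1 : Matrix (Fin n) (Fin n) A) p q)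
      = (1 : Matrix (Fin n) (Fin n) (A ⧸ π ^ 2)) p q := by
    intro p q
    by_cases h : p = q
    · subst h; rw [Matrix.one_apply_eq, Matrix.one_apply_eq, _root_.map_one]
    · rw [Matrix.one_apply_ne h, Matrix.one_apply_ne h, map_zero]
  have hgπ : ∀ p q : Fin n, p ≠ q → (g : Matrix (Fin n) (Fin n) A) p q ∈ π := by
    intro p q hpq
    have := hg p q
    rwa [Matrix.one_apply_ne hpq, sub_zero] at this
  have hgd : ∀ p : Fin n, (g : Matrix (Fin n) (Fin n) A) p p - 1 ∈ π := by
    intro p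
    have := hg p p
    rwa [Matrix.one_apply_eq] at this
  set X : Matrix (Fin n) (Fin n) (A ⧸ π ^ 2) := Ψ g - 1 with hXdef
  have hΨg : Ψ g = 1 + X := by rw [hXdef]; abel
  have hX : MQ π X := by
    intro p q
    refine ⟨(g : Matrix (Fin n) (Fin n) A) p q - (1 : Matrix (Fin n) (Fin n) A) p q,
      hg p q, ?_⟩
    rw [map_sub, phi_one, hXdef, Matrix.sub_apply, PsiA]
  have hXoff : ∀ p q : Fin n, p ≠ q → X p q = φ ((g : Matrix (Fin n) (Fin n) A) p q) := by
    intro p q hpq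
    rw [hXdef, Matrix.sub_apply, PsiA, Matrix.one_apply_ne hpq, sub_zero]
  -- Stage 1 : clear the off-diagonal entries mod π²
  set w : Fin n × Fin n → Matrix (Fin n) (Fin n) (A ⧸ π ^ 2) := fun p =>
    if p.1 = p.2 then 0
    else Matrix.single p.1 p.2 (φ (-((g : Matrix (Fin n) (Fin n) A) p.1 p.2))) with hw
  set e₁ : SL n A :=
    ((Finset.univ : Finset (Fin n × Fin n)).toList.map
      (fun p => elem' A p.1 p.2 (-((g : Matrix (Fin n) (Fin n) A) p.1 p.2)))).prod with he₁
  have he₁mem : e₁ ∈ Egrp A n π := by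
    rw [he₁]
    refine list_prod_mem ?_
    intro x hx
    rw [List.mem_map] at hx
    obtain ⟨p, -, rfl⟩ := hx
    exact elem'_mem_Egrp _ _ (fun hne => neg_mem (hgπ _ _ hne))
  have hMQw : ∀ p : Fin n × Fin n, MQ π (w p) := by
    intro p
    rw [hw]
    dsimp only
    split
    · exact MQ_zero π
    · exact MQ_std π ⟨-((g : Matrix (Fin n) (Fin n) A) p.1 p.2), neg_mem (hgπ _ _ ‹_›), rfl⟩
  set W : Matrix (Fin n) (Fin n) (A ⧸ π ^ 2) := ∑ p : Fin n × Fin n, w p with hWdef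
  have hMQW : MQ π W := MQ_sum π fun p _ => hMQw p
  have hΨe₁ : Ψ e₁ = 1 + W := by
    rw [he₁, map_list_prod, List.map_map]
    have step : ((Finset.univ : Finset (Fin n × Fin n)).toList.map
        (Ψ ∘ fun p => elem' A p.1 p.2 (-((g : Matrix (Fin n) (Fin n) A) p.1 p.2))))
        = ((Finset.univ : Finset (Fin n × Fin n)).toList.map w).map (fun u => 1 + u) := by
      rw [List.map_map]
      refine List.map_congr_left ?_
      intro p _
      rw [Function.comp_apply, Function.comp_apply, PsiE, hw]
    rw [step, prod_one_add π ?_, sum_toList, hWdef]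
    intro x hx
    rw [List.mem_map] at hx
    obtain ⟨p, -, rfl⟩ := hx
    exact hMQw p
  have hWapp : ∀ p q : Fin n, W p q = if p = q then 0 else -(X p q) := by
    intro p q
    rw [hWdef, Matrix.sum_apply, Finset.sum_eq_single (p, q)]
    · by_cases h : p = q
      · rw [hw]; dsimp only; rw [if_pos h, if_pos h, Matrix.zero_apply]
      · rw [hw]; dsimp only
        rw [if_neg h, if_neg h, single_apply_same, map_neg, hXoff p q h]
    · intro z _ hz
      rw [hw]; dsimp only
      split
      · rw [Matrix.zero_apply]
      · refine single_apply_of_ne _ _ _ _ _ ?_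
        rintro ⟨h1, h2⟩
        exact hz (Prod.ext h1 h2)
    · intro h
      exact absurd (Finset.mem_univ _) h
  have hA : Ψ e₁ * Ψ g = 1 + (X + W) := by
    rw [hΨe₁, hΨg]
    have expand : (1 + W) * (1 + X) = 1 + (X + W) + W * X := by noncomm_ring
    rw [expand, MQ_mul_zero π hMQW hX, add_zero]
  set D : Matrix (Fin n) (Fin n) (A ⧸ π ^ 2) := X + W with hDdef
  have hMQD : MQ π D := MQ_add π hX hMQW
  have hDdiag : D = Matrix.diagonal (fun p => X p p) := by
    ext p q
    rw [hDdef, Matrix.add_apply, hWapp]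
    by_cases h : p = q
    · subst h
      rw [if_pos rfl, add_zero, Matrix.diagonal_apply_eq]
    · rw [if_neg h, add_neg_cancel, Matrix.diagonal_apply_ne _ h]
  have hσ : ∑ p : Fin n, X p p = 0 := by
    have hdet : (Ψ e₁ * Ψ g).det = 1 := by
      rw [Matrix.det_mul, PsiD, PsiD, mul_one]
    rw [hA, hDdiag] at hdet
    rw [show (1 : Matrix (Fin n) (Fin n) (A ⧸ π ^ 2)) + Matrix.diagonal (fun p => X p p)
        = Matrix.diagonal (fun p => 1 + X p p) by
        rw [← Matrix.diagonal_one, Matrix.diagonal_add], Matrix.det_diagonal,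
      prod_one_add' π (fun p _ => hX p p)] at hdet
    exact (add_eq_left).mp hdet
  -- Stage 2 : fix the diagonal
  set b : Fin n → A := fun i => -((g : Matrix (Fin n) (Fin n) A) i i - 1) with hb
  have hbπ : ∀ i, b i ∈ π := fun i => neg_mem (hgd i)
  set d : Fin n → A ⧸ π ^ 2 := fun i => φ (b i) with hd
  have hinQd : ∀ i, inQ π (d i) := fun i => ⟨b i, hbπ i, rfl⟩
  have hdd : ∀ i, d i * d i = 0 := fun i => inQ_mul_zero π (hinQd i) (hinQd i)
  have hdX : ∀ i, d i = -(X i i) := by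
    intro i
    rw [hd]
    dsimp only
    rw [hb]
    dsimp only
    rw [map_neg, map_sub, _root_.map_one, hXdef, Matrix.sub_apply, PsiA, Matrix.one_apply_eq]
  set c : Fin n → SL n A := fun i =>
    elem' A i k (b i) * elem' A k i 1 * elem' A i k (-(b i)) * elem' A k i (-1) with hc
  have hcmem : ∀ i, i ≠ k → c i ∈ Egrp A n π := by
    intro i hik
    rw [hc]
    dsimp only
    have h1 : elem' A i k (b i) ∈ Egrp A n π := elem'_mem_Egrp _ _ (fun _ => hbπ i)
    have h2 : elem' A k i 1 * elem' A i k (-(b i)) * (elem' A k i 1)⁻¹ ∈ Egrp A n π := by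
      have ha : elem' A k i 1 = elem A k i (Ne.symm hik) 1 := by
        rw [elem', dif_pos (Ne.symm hik)]
      have hbb : elem' A i k (-(b i)) = elem A i k hik (-(b i)) := by
        rw [elem', dif_pos hik]
      rw [ha, hbb]
      exact conj_elem_mem (elem_mem_EgrpAbs _ _ _ _) i k hik (neg_mem (hbπ i))
    have h3 := mul_mem h1 h2
    rw [elem'_inv] at h3
    rw [show elem' A i k (b i) * elem' A k i 1 * elem' A i k (-(b i)) * elem' A k i (-1)
      = elem' A i k (b i) * (elem' A k i 1 * elem' A i k (-(b i)) * elem' A k i (-1)) by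
        rw [mul_assoc, mul_assoc, mul_assoc]]
    exact h3
  set u : Fin n → Matrix (Fin n) (Fin n) (A ⧸ π ^ 2) := fun i =>
    Matrix.single i i (d i) - Matrix.single k k (d i) + Matrix.single k i (d i) with hu
  have hMQu : ∀ i, MQ π (u i) := fun i =>
    MQ_add π (MQ_sub π (MQ_std π (hinQd i)) (MQ_std π (hinQd i))) (MQ_std π (hinQd i))
  have hΨc : ∀ i, i ≠ k → Ψ (c i) = 1 + u i := by
    intro i hik
    rw [hc]
    dsimp only
    rw [_root_.map_mul, _root_.map_mul, _root_.map_mul, PsiE, PsiE, PsiE, PsiE,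
      if_neg hik, if_neg (Ne.symm hik), if_neg hik, if_neg (Ne.symm hik),
      map_neg, map_neg, _root_.map_one]
    exact comm_calc hik (d i) (hdd i)
  set e₂ : SL n A := ((Finset.univ.erase k).toList.map c).prod with he₂
  have he₂mem : e₂ ∈ Egrp A n π := by
    rw [he₂]
    refine list_prod_mem ?_
    intro x hx
    rw [List.mem_map] at hx
    obtain ⟨i, hi, rfl⟩ := hx
    rw [Finset.mem_toList, Finset.mem_erase] at hi
    exact hcmem i hi.1
  set U : Matrix (Fin n) (Fin n) (A ⧸ π ^ 2) := ∑ i ∈ Finset.univ.erase k, u i with hUdef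
  have hMQU : MQ π U := MQ_sum π fun i _ => hMQu i
  have hΨe₂ : Ψ e₂ = 1 + U := by
    rw [he₂, map_list_prod, List.map_map]
    have step : (Finset.univ.erase k).toList.map (Ψ ∘ c)
        = ((Finset.univ.erase k).toList.map u).map (fun v => 1 + v) := by
      rw [List.map_map]
      refine List.map_congr_left ?_
      intro i hi
      rw [Finset.mem_toList, Finset.mem_erase] at hi
      rw [Function.comp_apply, Function.comp_apply]
      exact hΨc i hi.1
    rw [step, prod_one_add π ?_, sum_toList, hUdef]
    intro x hx
    rw [List.mem_map] at hx
    obtain ⟨i, -, rfl⟩ := hx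
    exact hMQu i
  have hB : Ψ e₂ * (1 + D) = 1 + (D + U) := by
    rw [hΨe₂]
    have expand : (1 + U) * (1 + D) = 1 + (D + U) + U * D := by noncomm_ring
    rw [expand, MQ_mul_zero π hMQU hMQD, add_zero]
  set V : Matrix (Fin n) (Fin n) (A ⧸ π ^ 2) := D + U with hVdef
  have hV : V = ∑ i ∈ Finset.univ.erase k, Matrix.single k i (d i) := by
    ext p q
    rw [hVdef, Matrix.add_apply, hDdiag, hUdef, Matrix.sum_apply, Matrix.sum_apply]
    by_cases hpq : p = q
    · subst hpq
      rw [Matrix.diagonal_apply_eq]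
      by_cases hpk : p = k
      · subst hpk
        have h1 : ∀ i ∈ Finset.univ.erase p, u i p p = X i i := by
          intro i hi
          rw [Finset.mem_erase] at hi
          rw [hu]
          dsimp only
          rw [Matrix.add_apply, Matrix.sub_apply,
            single_apply_of_ne _ _ _ _ _ (fun h => hi.1 h.1),
            single_apply_same,
            single_apply_of_ne _ _ _ _ _ (fun h => hi.1 h.2),
            zero_sub, add_zero, hdX, neg_neg]
        have h2 : ∀ i ∈ Finset.univ.erase p, Matrix.single p i (d i) p p = 0 := by
          intro i hi
          rw [Finset.mem_erase] at hi
          exact single_apply_of_ne _ _ _ _ _ (fun h => hi.1 h.2)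
        rw [Finset.sum_congr rfl h1, Finset.sum_congr rfl h2, Finset.sum_const_zero,
          show X p p + ∑ i ∈ Finset.univ.erase p, X i i = ∑ i : Fin n, X i i from
            Finset.add_sum_erase _ (fun i => X i i) (Finset.mem_univ p), hσ]
      · have h1 : ∀ i ∈ Finset.univ.erase k, u i p p = if i = p then d i else 0 := by
          intro i hi
          rw [Finset.mem_erase] at hi
          rw [hu]
          dsimp only
          rw [Matrix.add_apply, Matrix.sub_apply,
            single_apply_of_ne _ _ _ _ _ (fun h => hpk h.1.symm),
            single_apply_of_ne _ _ _ _ _ (fun h => hpk h.1.symm),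
            sub_zero, add_zero]
          by_cases hip : i = p
          · rw [hip, single_apply_same, if_pos rfl]
          · rw [single_apply_of_ne _ _ _ _ _ (fun h => hip h.1), if_neg hip]
        have h2 : ∀ i ∈ Finset.univ.erase k, Matrix.single k i (d i) p p = 0 := by
          intro i hi
          exact single_apply_of_ne _ _ _ _ _ (fun h => hpk h.1.symm)
        rw [Finset.sum_congr rfl h1, Finset.sum_congr rfl h2, Finset.sum_const_zero,
          Finset.sum_ite_eq' (Finset.univ.erase k) p d,
          if_pos (Finset.mem_erase.mpr ⟨hpk, Finset.mem_univ p⟩), hdX, add_neg_cancel]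
    · rw [Matrix.diagonal_apply_ne _ hpq]
      have h1 : ∀ i ∈ Finset.univ.erase k, u i p q = Matrix.single k i (d i) p q := by
        intro i hi
        rw [hu]
        dsimp only
        rw [Matrix.add_apply, Matrix.sub_apply,
          single_apply_of_ne _ _ _ _ _ (fun h => hpq (h.1.symm.trans h.2)),
          single_apply_of_ne _ _ _ _ _ (fun h => hpq (h.1.symm.trans h.2)),
          zero_sub, neg_zero, zero_add]
      rw [Finset.sum_congr rfl h1, zero_add]
  -- Stage 3 : clear the remaining off-diagonal entries
  set e₃ : SL n A :=
    ((Finset.univ.erase k).toList.map (fun i => elem' A k i (-(b i)))).prod with he₃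
  have he₃mem : e₃ ∈ Egrp A n π := by
    rw [he₃]
    refine list_prod_mem ?_
    intro x hx
    rw [List.mem_map] at hx
    obtain ⟨i, -, rfl⟩ := hx
    exact elem'_mem_Egrp _ _ (fun _ => neg_mem (hbπ i))
  set v : Fin n → Matrix (Fin n) (Fin n) (A ⧸ π ^ 2) := fun i =>
    Matrix.single k i (-(d i)) with hv
  have hMQv : ∀ i, MQ π (v i) := fun i => MQ_std π (inQ_neg π (hinQd i))
  have hΨe₃ : Ψ e₃ = 1 + ∑ i ∈ Finset.univ.erase k, v i := by
    rw [he₃, map_list_prod, List.map_map]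
    have step : (Finset.univ.erase k).toList.map (Ψ ∘ fun i => elem' A k i (-(b i)))
        = ((Finset.univ.erase k).toList.map v).map (fun x => 1 + x) := by
      rw [List.map_map]
      refine List.map_congr_left ?_
      intro i hi
      rw [Finset.mem_toList, Finset.mem_erase] at hi
      rw [Function.comp_apply, Function.comp_apply, PsiE, if_neg (Ne.symm hi.1), hv]
      dsimp only
      rw [map_neg, hd]
    rw [step, prod_one_add π ?_, sum_toList]
    intro x hx
    rw [List.mem_map] at hx
    obtain ⟨i, -, rfl⟩ := hx
    exact hMQv i
  have hC : Ψ e₃ * (1 + V) = 1 := by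
    rw [hΨe₃, hV]
    have hsum : (∑ i ∈ Finset.univ.erase k, v i)
        + (∑ i ∈ Finset.univ.erase k, Matrix.single k i (d i)) = 0 := by
      rw [← Finset.sum_add_distrib]
      refine Finset.sum_eq_zero fun i _ => ?_
      rw [hv]
      dsimp only
      rw [← single_add, neg_add_cancel, single_zero]
    have hz : (∑ i ∈ Finset.univ.erase k, v i)
        * (∑ i ∈ Finset.univ.erase k, Matrix.single k i (d i)) = 0 :=
      MQ_mul_zero π (MQ_sum π fun i _ => hMQv i)
        (MQ_sum π fun i _ => MQ_std π (hinQd i))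
    have expand : ∀ P Q : Matrix (Fin n) (Fin n) (A ⧸ π ^ 2),
        (1 + P) * (1 + Q) = 1 + (P + Q) + P * Q := by intros; noncomm_ring
    rw [expand, hsum, hz, add_zero, add_zero]
  -- Conclusion
  set e : SL n A := e₃ * e₂ * e₁ with he
  have hemem : e ∈ Egrp A n π := mul_mem (mul_mem he₃mem he₂mem) he₁mem
  have hΨeg : Ψ (e * g) = 1 := by
    have hassoc : e * g = e₃ * (e₂ * (e₁ * g)) := by rw [he]; group
    rw [hassoc, _root_.map_mul, _root_.map_mul, _root_.map_mul, hA, hB, hC]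
  have hegΓ : (e * g) ∈ Γset A n (π ^ 2) := by
    intro p q
    rw [← Ideal.Quotient.eq_zero_iff_mem (I := π ^ 2)]
    show φ _ = 0
    rw [map_sub, phi_one, ← PsiA, hΨeg, sub_self]
  exact ⟨e⁻¹, inv_mem hemem, e * g, hegΓ, by group⟩

end Main

/-- For `n ≥ 2`, `Γ_n(π) = E_n(π)·Γ_n(π²)`: every element of `Γ_n(π)` is a product of an
element of `E_n(π)` and an element of `Γ_n(π²)` (and conversely). -/
theorem gamma_eq_E_mul_gamma_sq (A : Type) [CommRing A] (π : Ideal A) (n : ℕ) (hn : 2 ≤ n) :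
    Γset A n π = {g | ∃ e ∈ Egrp A n π, ∃ h ∈ Γset A n (π ^ 2), g = e * h} := by
  ext g
  constructor
  · intro hg
    exact forward ⟨0, by omega⟩ hg
  · rintro ⟨e, he, h, hh, rfl⟩
    have h1 : e ∈ Γgrp A n π := Egrp_le_Γgrp π he
    have h2 : h ∈ Γgrp A n π := by
      show h ∈ Γset A n π
      intro p q
      exact Ideal.pow_le_self two_ne_zero (hh p q)
    exact (Γgrp A n π).mul_mem h1 h2
end

section
/- Let N ≥ 4 be an integer. Then F_2(Nℤ) is not a normal subgroup of Δ_2(Nℤ) in SL_2(ℤ): the matrix ω = [[1+N², −N²],[N², 1−N²]] lies in Δ_2(Nℤ), the matrix α^N with α = [[1,1],[0,1]] lies in F_2(Nℤ), but ω⁻¹·α^N·ω does not lie in F_2(Nℤ). -/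
open Matrix

/-- The true elementary subgroup `F_n(π)`: the subgroup of `SL_n(A)` generated by the
elementary matrices with coefficients in the ideal `π`. -/
def Fgrp (A : Type) [CommRing A] (n : ℕ) (π : Ideal A) : Subgroup (SL n A) :=
  Subgroup.closure {x | ∃ (i j : Fin n) (hij : i ≠ j), ∃ a ∈ π, x = elem A i j hij a}

/-- The secondary congruence subgroup
`Δ_n(π) = {g ∈ SL_n(A) : g ≡ 1_n mod π, g_{ii} ≡ 1 mod π²}`, as a set. -/
def Δset (A : Type) [CommRing A] (n : ℕ) (π : Ideal A) : Set (SL n A) :=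
  {g | (∀ p q : Fin n, (g : Matrix (Fin n) (Fin n) A) p q
          - (1 : Matrix (Fin n) (Fin n) A) p q ∈ π) ∧
       (∀ p : Fin n, (g : Matrix (Fin n) (Fin n) A) p p - 1 ∈ π ^ 2)}

/-- The matrix `ω = [[1+N², −N²],[N², 1−N²]] ∈ SL_2(ℤ)`. -/
def omegaMat (N : ℤ) : SL 2 ℤ :=
  ⟨!![1 + N ^ 2, -N ^ 2; N ^ 2, 1 - N ^ 2], by rw [Matrix.det_fin_two_of]; ring⟩

/-- The matrix `α = [[1,1],[0,1]] ∈ SL_2(ℤ)`. -/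
def alphaMat : SL 2 ℤ := ⟨!![1, 1; 0, 1], by rw [Matrix.det_fin_two_of]; ring⟩

/-! ### Auxiliary machinery: words in the elementary generators -/

/-- `Am N m = [[1, mN],[0,1]]`. -/
def Am (N m : ℤ) : SL 2 ℤ := ⟨!![1, m*N; 0, 1], by rw [Matrix.det_fin_two_of]; ring⟩

/-- `Bm N m = [[1,0],[mN,1]]`. -/
def Bm (N m : ℤ) : SL 2 ℤ := ⟨!![1, 0; m*N, 1], by rw [Matrix.det_fin_two_of]; ring⟩

/-- A letter: `true` is an `A`-type letter, `false` a `B`-type letter. -/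
def Lmat (N : ℤ) (x : Bool × ℤ) : SL 2 ℤ := if x.1 then Am N x.2 else Bm N x.2

/-- The value of a word. -/
def wval (N : ℤ) (w : List (Bool × ℤ)) : SL 2 ℤ := (w.map (Lmat N)).prod

/-- A word is alternating with nonzero exponents. -/
def IsAlt (w : List (Bool × ℤ)) : Prop :=
  w.Chain' (fun x y => x.1 ≠ y.1) ∧ ∀ x ∈ w, x.2 ≠ 0

lemma wval_nil (N : ℤ) : wval N [] = 1 := rfl

lemma wval_cons (N : ℤ) (x : Bool × ℤ) (w : List (Bool × ℤ)) :
    wval N (x :: w) = Lmat N x * wval N w := by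
  simp [wval]

lemma Lmat_mul (N : ℤ) (b : Bool) (m m' : ℤ) :
    Lmat N (b, m) * Lmat N (b, m') = Lmat N (b, m + m') := by
  cases b <;>
  · apply Subtype.ext
    show _ * _ = _
    simp only [Lmat, Am, Bm, if_true, if_false, Matrix.mul_fin_two]
    ext i j
    fin_cases i <;> fin_cases j <;> (simp; try ring)

lemma Lmat_zero (N : ℤ) (b : Bool) : Lmat N (b, 0) = 1 := by
  cases b <;>
  · apply Subtype.ext
    show _ = (1 : Matrix (Fin 2) (Fin 2) ℤ)
    simp [Lmat, Am, Bm, Matrix.one_fin_two]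

lemma Lmat_inv (N : ℤ) (b : Bool) (m : ℤ) : (Lmat N (b, m))⁻¹ = Lmat N (b, -m) := by
  apply inv_eq_of_mul_eq_one_right
  rw [Lmat_mul, add_neg_cancel, Lmat_zero]

lemma exists_prepend (N : ℤ) (b : Bool) (m : ℤ) (w : List (Bool × ℤ)) (hw : IsAlt w) :
    ∃ w', IsAlt w' ∧ wval N w' = Lmat N (b, m) * wval N w := by
  rcases eq_or_ne m 0 with rfl | hm
  · exact ⟨w, hw, by rw [Lmat_zero, one_mul]⟩
  rcases w with _ | ⟨⟨b', m'⟩, t⟩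
  · exact ⟨[(b, m)], ⟨List.isChain_singleton _, by simpa using hm⟩, by simp [wval_cons, wval_nil]⟩
  rcases eq_or_ne b b' with rfl | hb
  · rcases eq_or_ne (m + m') 0 with hmm | hmm
    · refine ⟨t, ⟨(List.isChain_cons.1 hw.1).2, fun x hx => hw.2 x (by simp [hx])⟩, ?_⟩
      rw [wval_cons, ← mul_assoc, Lmat_mul, hmm, Lmat_zero, one_mul]
    · refine ⟨(b, m + m') :: t, ⟨?_, ?_⟩, ?_⟩
      · exact List.isChain_cons.2 ⟨fun y hy => (List.isChain_cons.1 hw.1).1 y hy,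
          (List.isChain_cons.1 hw.1).2⟩
      · rintro x hx
        rcases List.mem_cons.1 hx with rfl | hx
        · exact hmm
        · exact hw.2 x (by simp [hx])
      · rw [wval_cons, wval_cons, ← mul_assoc, Lmat_mul]
  · refine ⟨(b, m) :: (b', m') :: t, ⟨?_, ?_⟩, by rw [wval_cons]⟩
    · apply List.isChain_cons_cons.2
      exact ⟨hb, hw.1⟩
    · rintro x hx
      rcases List.mem_cons.1 hx with rfl | hx
      · exact hm
      · exact hw.2 x hx

lemma Am_entries (N m : ℤ) (g : SL 2 ℤ) :
    (Am N m * g).1 0 0 = g.1 0 0 + m*N*(g.1 1 0) ∧ (Am N m * g).1 1 0 = g.1 1 0 := by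
  constructor <;>
  · show ((Am N m).1 * g.1) _ _ = _
    rw [Matrix.mul_apply, Fin.sum_univ_two]
    simp [Am]

lemma Bm_entries (N m : ℤ) (g : SL 2 ℤ) :
    (Bm N m * g).1 0 0 = g.1 0 0 ∧ (Bm N m * g).1 1 0 = m*N*(g.1 0 0) + g.1 1 0 := by
  constructor <;>
  · show ((Bm N m).1 * g.1) _ _ = _
    rw [Matrix.mul_apply, Fin.sum_univ_two]
    simp [Bm]

/-- The ping-pong invariant on the first column, depending on the first letter of the word. -/
def WInv (N : ℤ) (w : List (Bool × ℤ)) : Prop :=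
  match w.head? with
  | none => (wval N w).1 0 0 = 1 ∧ (wval N w).1 1 0 = 0
  | some (true, _) => (wval N w).1 0 0 ≠ 0 ∧
      (N-1) * |(wval N w).1 1 0| ≤ |(wval N w).1 0 0|
  | some (false, _) => (wval N w).1 1 0 ≠ 0 ∧
      (N-1) * |(wval N w).1 0 0| ≤ |(wval N w).1 1 0|

lemma keystep (N m a c : ℤ) (hN : 4 ≤ N) (hm : m ≠ 0) (hc : c ≠ 0)
    (h : (N-1) * |a| ≤ |c|) : a + m*N*c ≠ 0 ∧ (N-1) * |c| ≤ |a + m*N*c| := by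
  have h1 : |m*N*c| ≤ |a + m*N*c| + |a| := by
    calc |m*N*c| = |(a + m*N*c) + (-a)| := by ring_nf
    _ ≤ |a + m*N*c| + |-a| := abs_add_le _ _
    _ = |a + m*N*c| + |a| := by rw [abs_neg]
  have h2 : |m*N*c| = |m| * N * |c| := by
    rw [abs_mul, abs_mul, abs_of_pos (by linarith : (0:ℤ) < N)]
  have hm1 : 1 ≤ |m| := Int.one_le_abs hm
  have hc1 : 1 ≤ |c| := Int.one_le_abs hc
  have ha : |a| ≤ |c| := by nlinarith [abs_nonneg a]
  have key : (N-1) * |c| ≤ |a + m*N*c| := by nlinarith [abs_nonneg c, abs_nonneg (a + m*N*c)]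
  refine ⟨fun h0 => ?_, key⟩
  rw [h0, abs_zero] at key
  nlinarith

lemma inv_holds (N : ℤ) (hN : 4 ≤ N) : ∀ w : List (Bool × ℤ), IsAlt w → WInv N w := by
  intro w
  induction w with
  | nil =>
    intro _
    show (wval N []).1 0 0 = 1 ∧ (wval N []).1 1 0 = 0
    rw [wval_nil]
    constructor
    · show (1 : Matrix (Fin 2) (Fin 2) ℤ) 0 0 = 1; simp
    · show (1 : Matrix (Fin 2) (Fin 2) ℤ) 1 0 = 0; simp
  | cons x t ih =>
    intro hw
    obtain ⟨b, m⟩ := x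
    have hm : m ≠ 0 := hw.2 (b, m) List.mem_cons_self
    have ht : IsAlt t := ⟨(List.isChain_cons.1 hw.1).2, fun y hy => hw.2 y (by simp [hy])⟩
    have iht := ih ht
    rcases t with _ | ⟨⟨b', m'⟩, t'⟩
    · obtain ⟨ha, hc⟩ : (wval N []).1 0 0 = 1 ∧ (wval N []).1 1 0 = 0 := iht
      cases b
      · show (wval N ((false, m) :: [])).1 1 0 ≠ 0 ∧
          (N-1) * |(wval N ((false, m) :: [])).1 0 0| ≤ |(wval N ((false, m) :: [])).1 1 0|
        rw [wval_cons, show Lmat N (false, m) = Bm N m from rfl]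
        have hB := Bm_entries N m (wval N [])
        rw [hB.1, hB.2, ha, hc]
        have hm1 : 1 ≤ |m| := Int.one_le_abs hm
        have hNpos : (0:ℤ) < N := by linarith
        constructor
        · intro h0
          have h0' : m * N = 0 := by linarith [h0]
          rcases mul_eq_zero.1 h0' with h | h
          · exact hm h
          · linarith
        · have habs : |m * N * 1 + 0| = |m| * N := by
            rw [show m*N*1+(0:ℤ) = m*N by ring, abs_mul, abs_of_pos hNpos]
          rw [habs, abs_one, mul_one]
          nlinarith
      · show (wval N ((true, m) :: [])).1 0 0 ≠ 0 ∧
          (N-1) * |(wval N ((true, m) :: [])).1 1 0| ≤ |(wval N ((true, m) :: [])).1 0 0|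
        rw [wval_cons, show Lmat N (true, m) = Am N m from rfl]
        have hA := Am_entries N m (wval N [])
        rw [hA.1, hA.2, ha, hc]
        norm_num
    · have hb' : b ≠ b' := by
        have := (List.isChain_cons.1 hw.1).1 (b', m') (by simp)
        simpa using this
      set g := wval N ((b', m') :: t') with hg
      cases b
      · have hb'' : b' = true := by
          cases b' with
          | false => exact absurd rfl hb'
          | true => rfl
        subst hb''
        obtain ⟨ha0, hineq⟩ : g.1 0 0 ≠ 0 ∧ (N-1) * |g.1 1 0| ≤ |g.1 0 0| := iht
        show (wval N ((false, m) :: (true, m') :: t')).1 1 0 ≠ 0 ∧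
          (N-1) * |(wval N ((false, m) :: (true, m') :: t')).1 0 0| ≤
            |(wval N ((false, m) :: (true, m') :: t')).1 1 0|
        rw [wval_cons, show Lmat N (false, m) = Bm N m from rfl, ← hg]
        have hB := Bm_entries N m g
        rw [hB.1, hB.2]
        have := keystep N m (g.1 1 0) (g.1 0 0) hN hm ha0 hineq
        exact ⟨by rw [add_comm]; exact this.1, by rw [add_comm]; exact this.2⟩
      · have hb'' : b' = false := by
          cases b' with
          | false => rfl
          | true => exact absurd rfl hb'
        subst hb''
        obtain ⟨hc0, hineq⟩ : g.1 1 0 ≠ 0 ∧ (N-1) * |g.1 0 0| ≤ |g.1 1 0| := iht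
        show (wval N ((true, m) :: (false, m') :: t')).1 0 0 ≠ 0 ∧
          (N-1) * |(wval N ((true, m) :: (false, m') :: t')).1 1 0| ≤
            |(wval N ((true, m) :: (false, m') :: t')).1 0 0|
        rw [wval_cons, show Lmat N (true, m) = Am N m from rfl, ← hg]
        have hA := Am_entries N m g
        rw [hA.1, hA.2]
        exact keystep N m (g.1 0 0) (g.1 1 0) hN hm hc0 hineq

def upow (k : ℤ) : SL 2 ℤ := ⟨!![1, k; 0, 1], by rw [Matrix.det_fin_two_of]; ring⟩

lemma elem_eq_upow (h : (0 : Fin 2) ≠ 1) (a : ℤ) : elem ℤ 0 1 h a = upow a := by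
  apply Subtype.ext
  show Matrix.transvection 0 1 a = _
  ext i j
  fin_cases i <;> fin_cases j <;>
    simp [Matrix.transvection, Matrix.single, upow, Matrix.one_apply]

lemma elem_eq_low (h : (1 : Fin 2) ≠ 0) (a : ℤ) :
    elem ℤ 1 0 h a = (⟨!![1, 0; a, 1], by rw [Matrix.det_fin_two_of]; ring⟩ : SL 2 ℤ) := by
  apply Subtype.ext
  show Matrix.transvection 1 0 a = _
  ext i j
  fin_cases i <;> fin_cases j <;>
    simp [Matrix.transvection, Matrix.single, Matrix.one_apply]

lemma gen_form (N : ℤ) (x : SL 2 ℤ)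
    (hx : x ∈ {x : SL 2 ℤ | ∃ (i j : Fin 2) (hij : i ≠ j),
      ∃ a ∈ Ideal.span {N}, x = elem ℤ i j hij a}) :
    ∃ b k, x = Lmat N (b, k) := by
  obtain ⟨i, j, hij, a, ha, rfl⟩ := hx
  obtain ⟨k, hk⟩ := Ideal.mem_span_singleton.1 ha
  fin_cases i <;> fin_cases j
  · exact absurd rfl hij
  · refine ⟨true, k, ?_⟩
    show elem ℤ 0 1 hij a = Lmat N (true, k)
    rw [elem_eq_upow hij a]
    apply Subtype.ext
    show (upow a).1 = (Am N k).1
    simp [upow, Am, Lmat, hk, mul_comm]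
  · refine ⟨false, k, ?_⟩
    show elem ℤ 1 0 hij a = Lmat N (false, k)
    rw [elem_eq_low hij a]
    apply Subtype.ext
    show _ = (Bm N k).1
    simp [Bm, Lmat, hk, mul_comm]
  · exact absurd rfl hij

lemma rep (N : ℤ) (g : SL 2 ℤ) (hg : g ∈ Fgrp ℤ 2 (Ideal.span {N})) :
    ∃ w, IsAlt w ∧ wval N w = g := by
  induction hg using Subgroup.closure_induction_left with
  | one => exact ⟨[], ⟨List.isChain_nil, by simp⟩, wval_nil N⟩
  | mul_left x hx y hy ih =>
    obtain ⟨w, hw, hv⟩ := ih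
    obtain ⟨b, k, rfl⟩ := gen_form N x hx
    obtain ⟨w', h1, h2⟩ := exists_prepend N b k w hw
    exact ⟨w', h1, by rw [h2, hv]⟩
  | inv_mul_cancel x hx y hy ih =>
    obtain ⟨w, hw, hv⟩ := ih
    obtain ⟨b, k, rfl⟩ := gen_form N x hx
    obtain ⟨w', h1, h2⟩ := exists_prepend N b (-k) w hw
    exact ⟨w', h1, by rw [h2, hv, Lmat_inv]⟩

lemma upow_mul (k l : ℤ) : upow k * upow l = upow (k + l) := by
  apply Subtype.ext
  show (upow k).1 * (upow l).1 = _
  simp only [upow, Matrix.mul_fin_two]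
  ext i j
  fin_cases i <;> fin_cases j <;> (simp; try ring)

lemma upow_zero : upow 0 = 1 := by
  apply Subtype.ext
  show _ = (1 : Matrix (Fin 2) (Fin 2) ℤ)
  simp [upow, Matrix.one_fin_two]

lemma alpha_eq : alphaMat = upow 1 := rfl

lemma alpha_inv : alphaMat⁻¹ = upow (-1) := by
  apply inv_eq_of_mul_eq_one_right
  rw [alpha_eq, upow_mul]
  norm_num [upow_zero]

lemma alpha_zpow (k : ℤ) : alphaMat ^ k = upow k := by
  induction k using Int.induction_on with
  | zero => rw [zpow_zero, upow_zero]
  | succ i ih => rw [_root_.zpow_add_one, ih, alpha_eq, upow_mul]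
  | pred i ih =>
    rw [show (-(i:ℤ) - 1) = (-(i:ℤ)) - 1 from rfl, _root_.zpow_sub_one, ih, alpha_inv, upow_mul]
    exact congrArg upow (by ring)

def omegaInv (N : ℤ) : SL 2 ℤ :=
  ⟨!![1 - N ^ 2, N ^ 2; -N ^ 2, 1 + N ^ 2], by rw [Matrix.det_fin_two_of]; ring⟩

lemma omega_inv (N : ℤ) : (omegaMat N)⁻¹ = omegaInv N := by
  apply inv_eq_of_mul_eq_one_right
  apply Subtype.ext
  show (omegaMat N).1 * (omegaInv N).1 = (1 : Matrix (Fin 2) (Fin 2) ℤ)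
  simp only [omegaMat, omegaInv, Matrix.mul_fin_two, Matrix.one_fin_two]
  ext i j
  fin_cases i <;> fin_cases j <;> (simp; try ring)

lemma conj_entries (N : ℤ) :
    ((omegaMat N)⁻¹ * alphaMat ^ N * omegaMat N).1 0 0 = 1 + N^3 - N^5 ∧
    ((omegaMat N)⁻¹ * alphaMat ^ N * omegaMat N).1 1 0 = -N^5 := by
  rw [omega_inv, alpha_zpow]
  constructor <;>
  · show ((omegaInv N).1 * (upow N).1 * (omegaMat N).1) _ _ = _
    simp only [omegaInv, upow, omegaMat, Matrix.mul_fin_two]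
    simp
    ring

/-- For an integer `N ≥ 4`, `F_2(Nℤ)` is not a normal subgroup of `Δ_2(Nℤ)` in `SL_2(ℤ)`:
the matrix `ω = [[1+N², −N²],[N², 1−N²]]` lies in `Δ_2(Nℤ)`, the matrix `α^N` with
`α = [[1,1],[0,1]]` lies in `F_2(Nℤ)`, but `ω⁻¹·α^N·ω` does not lie in `F_2(Nℤ)`. -/
theorem F_not_normal_in_Delta (N : ℤ) (hN : 4 ≤ N) :
    omegaMat N ∈ Δset ℤ 2 (Ideal.span {N}) ∧
    alphaMat ^ N ∈ Fgrp ℤ 2 (Ideal.span {N}) ∧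
    (omegaMat N)⁻¹ * alphaMat ^ N * omegaMat N ∉ Fgrp ℤ 2 (Ideal.span {N}) := by
  refine ⟨⟨?_, ?_⟩, ?_, ?_⟩
  · -- congruence mod N
    intro p q
    rw [Ideal.mem_span_singleton]
    fin_cases p <;> fin_cases q <;> simp [omegaMat, Matrix.one_apply] <;>
      first
        | exact ⟨N, by ring⟩
        | exact ⟨-N, by ring⟩
  · -- diagonal mod N²
    intro p
    rw [Ideal.span_singleton_pow, Ideal.mem_span_singleton]
    fin_cases p <;> simp [omegaMat] <;>
      first
        | exact ⟨1, by ring⟩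
        | exact ⟨-1, by ring⟩
  · -- α^N ∈ F
    rw [alpha_zpow, ← elem_eq_upow (by decide) N]
    exact Subgroup.subset_closure ⟨0, 1, by decide, N, Ideal.mem_span_singleton_self N, rfl⟩
  · -- the conjugate is not in F
    intro hmem
    obtain ⟨w, hw, hv⟩ := rep N _ hmem
    have hinv := inv_holds N hN w hw
    obtain ⟨hA, hC⟩ := conj_entries N
    have hN5 : (0:ℤ) < N^5 := by positivity
    have hN2 : (16:ℤ) ≤ N^2 := by nlinarith
    have hN3 : (64:ℤ) ≤ N^3 := by nlinarith
    have hprod : (960:ℤ) ≤ N^3 * (N^2 - 1) := by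
      have h := mul_le_mul hN3 (show (15:ℤ) ≤ N^2 - 1 by linarith) (by norm_num)
        (show (0:ℤ) ≤ N^3 by positivity)
      linarith
    have hneg : 1 + N^3 - N^5 < 0 := by nlinarith
    rcases w with _ | ⟨⟨b, m⟩, t⟩
    · obtain ⟨_, h2⟩ : (wval N []).1 0 0 = 1 ∧ (wval N []).1 1 0 = 0 := hinv
      rw [hv, hC] at h2
      nlinarith
    · cases b
      · obtain ⟨_, h2⟩ : (wval N ((false, m) :: t)).1 1 0 ≠ 0 ∧
          (N-1) * |(wval N ((false, m) :: t)).1 0 0| ≤ |(wval N ((false, m) :: t)).1 1 0| := hinv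
        rw [hv, hA, hC] at h2
        rw [abs_of_neg hneg, abs_of_neg (by nlinarith : (-N^5 : ℤ) < 0)] at h2
        nlinarith [mul_nonneg (by nlinarith : (0:ℤ) ≤ N^4) (by linarith : (0:ℤ) ≤ N - 4),
          mul_nonneg (by nlinarith : (0:ℤ) ≤ N^3) (by linarith : (0:ℤ) ≤ N - 4),
          mul_nonneg (by nlinarith : (0:ℤ) ≤ N^5) (by linarith : (0:ℤ) ≤ N - 4),
          mul_nonneg (by nlinarith : (0:ℤ) ≤ N) (by nlinarith : (0:ℤ) ≤ N^2 - 1)]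
      · obtain ⟨_, h2⟩ : (wval N ((true, m) :: t)).1 0 0 ≠ 0 ∧
          (N-1) * |(wval N ((true, m) :: t)).1 1 0| ≤ |(wval N ((true, m) :: t)).1 0 0| := hinv
        rw [hv, hA, hC] at h2
        rw [abs_of_neg hneg, abs_of_neg (by nlinarith : (-N^5 : ℤ) < 0)] at h2
        nlinarith [mul_nonneg (by nlinarith : (0:ℤ) ≤ N^5) (by linarith : (0:ℤ) ≤ N - 4)]
end

section
/- Let N ≥ 4 be an integer. Then the matrices α = [[1,1],[0,1]] and β = [[1,0],[N,1]] generate a free subgroup of rank 2 in SL_2(ℤ), i.e., the homomorphism from the free group on two generators to SL_2(ℤ) sending the generators to α and β respectively is injective. -/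
open Matrix

/-- The matrix `β = [[1,0],[N,1]] ∈ SL_2(ℤ)`. -/
def betaMat (N : ℤ) : SL 2 ℤ := ⟨!![1, 0; N, 1], by rw [Matrix.det_fin_two_of]; ring⟩

namespace AlphaBetaFree

/-- Action of a matrix in `SL 2 ℤ` on a pair of integers. -/
def act (M : SL 2 ℤ) (v : ℤ × ℤ) : ℤ × ℤ :=
  (M.1 0 0 * v.1 + M.1 0 1 * v.2, M.1 1 0 * v.1 + M.1 1 1 * v.2)

lemma act_one (v : ℤ × ℤ) : act 1 v = v := by
  simp [act, Matrix.SpecialLinearGroup.coe_one]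

lemma act_mul (A B : SL 2 ℤ) (v : ℤ × ℤ) : act (A * B) v = act A (act B v) := by
  simp only [act, Matrix.SpecialLinearGroup.coe_mul, Matrix.mul_apply, Fin.sum_univ_two,
    Prod.mk.injEq]
  constructor <;> ring

/-- sign of a letter -/
def sgn (b : Bool) : ℤ := cond b 1 (-1)

/-- the action of one letter -/
def step (N : ℤ) (a : Fin 2 × Bool) (v : ℤ × ℤ) : ℤ × ℤ :=
  if a.1 = 0 then (v.1 + sgn a.2 * v.2, v.2) else (v.1, v.2 + sgn a.2 * N * v.1)

/-- the matrix of a letter -/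
def letter (N : ℤ) (a : Fin 2 × Bool) : SL 2 ℤ :=
  cond a.2 (![alphaMat, betaMat N] a.1) (![alphaMat, betaMat N] a.1)⁻¹

lemma act_letter (N : ℤ) (a : Fin 2 × Bool) (v : ℤ × ℤ) :
    act (letter N a) v = step N a v := by
  obtain ⟨i, b⟩ := a
  fin_cases i <;> cases b <;>
    simp only [letter, cond_false, cond_true, act, Matrix.SpecialLinearGroup.coe_inv] <;>
    simp [letter, act, step, alphaMat, betaMat, sgn,
      Matrix.SpecialLinearGroup.coe_inv, Matrix.adjugate_fin_two_of] <;> ring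

lemma act_prod (N : ℤ) (L : List (Fin 2 × Bool)) (v : ℤ × ℤ) :
    act (List.prod (L.map (letter N))) v = List.foldr (step N) v L := by
  induction L with
  | nil => simpa using act_one v
  | cons a L ih =>
    rw [List.map_cons, List.prod_cons, List.foldr_cons, act_mul, ih, act_letter]

/-- The ping-pong invariant associated to the most recently applied letter. -/
def Inv (a : Fin 2 × Bool) (v : ℤ × ℤ) : Prop :=
  if a.1 = 0 then |v.2| < 2 * |v.1| ∧ 0 < sgn a.2 * v.1 * v.2
  else 2 * |v.1| < |v.2| ∧ 0 < sgn a.2 * v.1 * v.2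

lemma sgn_cases (b : Bool) : sgn b = 1 ∨ sgn b = -1 := by cases b <;> simp [sgn]

lemma step_alpha (e x y : ℤ) (he : e = 1 ∨ e = -1)
    (h : 2 * |x| < |y| ∨ (|y| < 2 * |x| ∧ 0 < e * x * y)) :
    |y| < 2 * |x + e * y| ∧ 0 < e * (x + e * y) * y := by
  rcases abs_cases x with ⟨hx, hx'⟩ | ⟨hx, hx'⟩ <;>
    rcases abs_cases y with ⟨hy, hy'⟩ | ⟨hy, hy'⟩ <;>
    rcases abs_cases (x + e * y) with ⟨hz, hz'⟩ | ⟨hz, hz'⟩ <;>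
    rcases he with rfl | rfl <;>
    rcases h with h | ⟨h1, h2⟩ <;>
    constructor <;> nlinarith

lemma step_beta (N e x y : ℤ) (hN : 4 ≤ N) (he : e = 1 ∨ e = -1)
    (h : |y| < 2 * |x| ∨ (2 * |x| < |y| ∧ 0 < e * x * y)) :
    2 * |x| < |y + e * N * x| ∧ 0 < e * x * (y + e * N * x) := by
  rcases abs_cases x with ⟨hx, hx'⟩ | ⟨hx, hx'⟩ <;>
    rcases abs_cases y with ⟨hy, hy'⟩ | ⟨hy, hy'⟩ <;>
    rcases abs_cases (y + e * N * x) with ⟨hz, hz'⟩ | ⟨hz, hz'⟩ <;>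
    rcases he with rfl | rfl <;>
    rcases h with h | ⟨h1, h2⟩ <;>
    constructor <;> nlinarith

/-- The key transition step. -/
lemma inv_step (N : ℤ) (hN : 4 ≤ N) (a b : Fin 2 × Bool) (v : ℤ × ℤ)
    (hv : Inv b v) (hab : a.1 = b.1 → a.2 = b.2) :
    Inv a (step N a v) := by
  obtain ⟨x, y⟩ := v
  by_cases h0 : a.1 = 0
  · have hstep : step N a (x, y) = (x + sgn a.2 * y, y) := by simp [step, h0]
    rw [hstep, Inv, if_pos h0]
    apply step_alpha _ x y (sgn_cases a.2)
    by_cases hb : b.1 = 0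
    · have hs : a.2 = b.2 := hab (h0.trans hb.symm)
      right
      rw [Inv, if_pos hb] at hv
      rw [hs]; exact hv
    · left
      rw [Inv, if_neg hb] at hv
      exact hv.1
  · have hstep : step N a (x, y) = (x, y + sgn a.2 * N * x) := by simp [step, h0]
    rw [hstep, Inv, if_neg h0]
    apply step_beta N _ x y hN (sgn_cases a.2)
    by_cases hb : b.1 = 0
    · left
      rw [Inv, if_pos hb] at hv
      exact hv.1
    · have hs : a.2 = b.2 := hab (by omega)
      right
      rw [Inv, if_neg hb] at hv
      rw [hs]; exact hv

/-- start vector depending on the last letter -/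
def start (g : Fin 2) : ℤ × ℤ := if g = 0 then (0, 1) else (1, 0)

lemma inv_base (N : ℤ) (hN : 4 ≤ N) (b : Fin 2 × Bool) :
    Inv b (step N b (start b.1)) := by
  obtain ⟨i, s⟩ := b
  have hNa : |N| = N := abs_of_nonneg (by linarith)
  fin_cases i <;> cases s <;>
    simp [Inv, step, start, sgn, hNa] <;> omega

/-- good pairs -/
def R (a b : Fin 2 × Bool) : Prop := a.1 = b.1 → a.2 = b.2

lemma main (N : ℤ) (hN : 4 ≤ N) :
    ∀ (L : List (Fin 2 × Bool)) (a c : Fin 2 × Bool),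
      List.Chain' R (a :: (L ++ [c])) →
      Inv a (List.foldr (step N) (start c.1) (a :: (L ++ [c]))) := by
  intro L
  induction L with
  | nil =>
    intro a c hc
    simp only [List.nil_append] at hc
    rw [List.Chain', List.isChain_cons_cons] at hc
    simp only [List.nil_append, List.foldr_cons, List.foldr_nil]
    exact inv_step N hN a c _ (inv_base N hN c) hc.1
  | cons b L ih =>
    intro a c hc
    rw [List.cons_append, List.Chain', List.isChain_cons_cons] at hc
    have h2 := ih b c hc.2
    rw [List.cons_append, List.foldr_cons]
    exact inv_step N hN a b _ h2 hc.1

lemma chain'_of_reduce : ∀ (L : List (Fin 2 × Bool)), FreeGroup.reduce L = L →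
    List.Chain' R L := by
  intro L
  induction L with
  | nil => intro _; exact List.isChain_nil
  | cons a L ih =>
    intro h
    rw [FreeGroup.reduce.cons] at h
    have hlen : (FreeGroup.reduce L).length ≤ L.length :=
      FreeGroup.reduce.red.length_le
    cases hr : FreeGroup.reduce L with
    | nil =>
      rw [hr] at h
      simp only at h
      injection h with h1 h2
      rw [← h2]
      exact List.isChain_singleton a
    | cons hd tl =>
      rw [hr] at h hlen
      simp only at h
      by_cases hcond : a.1 = hd.1 ∧ a.2 = !hd.2
      · rw [if_pos hcond] at h
        exfalso
        have hlen2 := congrArg List.length h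
        simp only [List.length_cons] at hlen hlen2
        omega
      · rw [if_neg hcond] at h
        have hL : L = hd :: tl := by
          injection h with h1 h2
          exact h2.symm
        have hrl : FreeGroup.reduce L = L := by rw [hr, hL]
        have hch := ih hrl
        rw [hL] at hch ⊢
        rw [List.Chain', List.isChain_cons_cons]
        refine ⟨?_, hch⟩
        intro h1
        by_contra h2
        exact hcond ⟨h1, by revert h2; cases a.2 <;> cases hd.2 <;> simp⟩

end AlphaBetaFree

/-- For an integer `N ≥ 4`, the matrices `α = [[1,1],[0,1]]` and `β = [[1,0],[N,1]]`
generate a free subgroup of rank `2` in `SL_2(ℤ)`: the homomorphism from the free group on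
two generators to `SL_2(ℤ)` sending the generators to `α` and `β` is injective. -/
theorem alpha_beta_free (N : ℤ) (hN : 4 ≤ N) :
    Function.Injective ⇑(FreeGroup.lift ![alphaMat, betaMat N] : FreeGroup (Fin 2) →* SL 2 ℤ) := by
  open AlphaBetaFree in
  rw [injective_iff_map_eq_one]
  intro w hw
  by_contra hne
  -- the reduced word of w
  set L := w.toWord with hL
  have hLne : L ≠ [] := fun h => hne (FreeGroup.toWord_eq_nil_iff.mp h)
  have hred : FreeGroup.reduce L = L := FreeGroup.reduce_toWord w
  have hchain : List.Chain' AlphaBetaFree.R L := AlphaBetaFree.chain'_of_reduce L hred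
  -- decompose L as a :: M ++ [c]
  obtain ⟨a, M0, hM0⟩ := List.exists_cons_of_ne_nil hLne
  obtain rfl | ⟨M, c, hMc⟩ := M0.eq_nil_or_concat
  on_goal 2 => rw [List.concat_eq_append] at hMc
  · -- L = [a]
    have h1 : Inv a (List.foldr (AlphaBetaFree.step N) (start a.1) L) := by
      rw [hM0]
      exact AlphaBetaFree.inv_base N hN a
    -- now f w acts as the foldr
    have h2 : act (FreeGroup.lift ![alphaMat, betaMat N] w) (start a.1)
        = List.foldr (AlphaBetaFree.step N) (start a.1) L := by
      have hmap : (fun x : Fin 2 × Bool =>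
          cond x.2 ((![alphaMat, betaMat N]) x.1) ((![alphaMat, betaMat N]) x.1)⁻¹)
          = letter N := by
        funext x; cases hx : x.2 <;> simp [letter, hx]
      conv_lhs => rw [← FreeGroup.mk_toWord (x := w)]
      rw [FreeGroup.lift_mk, hmap, act_prod]
    rw [hw, act_one] at h2
    rw [← h2] at h1
    rw [AlphaBetaFree.Inv] at h1
    unfold AlphaBetaFree.start at h1
    split at h1 <;> (try split at h1) <;> simp_all
  · -- L = a :: M ++ [c]
    rw [hMc] at hM0
    have h1 : Inv a (List.foldr (AlphaBetaFree.step N) (start c.1) L) := by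
      rw [hM0]
      exact AlphaBetaFree.main N hN M a c (by rw [← hM0]; exact hchain)
    have h2 : act (FreeGroup.lift ![alphaMat, betaMat N] w) (start c.1)
        = List.foldr (AlphaBetaFree.step N) (start c.1) L := by
      have hmap : (fun x : Fin 2 × Bool =>
          cond x.2 ((![alphaMat, betaMat N]) x.1) ((![alphaMat, betaMat N]) x.1)⁻¹)
          = letter N := by
        funext x; cases hx : x.2 <;> simp [letter, hx]
      conv_lhs => rw [← FreeGroup.mk_toWord (x := w)]
      rw [FreeGroup.lift_mk, hmap, act_prod]
    rw [hw, act_one] at h2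
    rw [← h2] at h1
    rw [AlphaBetaFree.Inv] at h1
    unfold AlphaBetaFree.start at h1
    split at h1 <;> (try split at h1) <;> simp_all
end
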